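/- Let B be an integrable ℝ^{d_w}-valued random vector and let R and X̃ be random vectors on the same probability space such that B and X̃ are conditionally independent given σ(R). Then almost surely E[B | σ(X̃)] = E[ E[B | σ(R)] | σ(X̃) ]; that is, E[B | σ(X̃, R)] = E[B | σ(R)] almost surely, and the tower property yields the displayed identity. Consequently, in the CRC model under Assumptions I with X̃ = (X₁,…,X_{d_b}) the vector of basic endogenous variables and R the conditional-rank vector, the 'average effect of treatment on the treated' E[B | X̃ = x] equals the average of β(F_{X₁|Z}(x₁|z),…,F_{X_{d_b}|Z}(x_{d_b}|z)) over the conditional distribution of Z given X̃ = x, where β(r) = E[B | R = r]; it is therefore point identified for any x such that (F_{X₁|Z}(x₁|z),…,F_{X_{d_b}|Z}(x_{d_b}|z)) ∈ 𝓡 for all z in the support of Z given X̃ = x. -/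

import Mathlib

set_option maxHeartbeats 1000000


open MeasureTheory ProbabilityTheory

section Aux

variable {Ω : Type*} {m' m₁ mX : MeasurableSpace Ω} {mΩ : MeasurableSpace Ω}
  {μ : Measure Ω} [IsProbabilityMeasure μ]

/-- Pull-out lemma at the level of integrals: for `h` measurable w.r.t. the conditioning
σ-algebra `m'` and integrable, `∫ h · 1_A = ∫ h · E[1_A | m']`. -/
private lemma pullout_aux (hm' : m' ≤ mΩ)
    {h : Ω → ℝ} (hh : StronglyMeasurable[m'] h) (hhint : Integrable h μ)
    {A : Set Ω} (hA : MeasurableSet[mΩ] A) :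
    ∫ x, h x * A.indicator (fun _ => (1:ℝ)) x ∂μ
      = ∫ x, h x * (μ[A.indicator (fun _ => (1:ℝ)) | m']) x ∂μ := by
  have hind : Integrable (A.indicator fun _ => (1:ℝ)) μ :=
    (integrable_const (1:ℝ)).indicator hA
  have hmul : Integrable (h * A.indicator fun _ => (1:ℝ)) μ := by
    have hEq : (h * A.indicator fun _ => (1:ℝ)) = A.indicator h := by
      funext x; by_cases hx : x ∈ A <;> simp [Set.indicator_apply, hx]
    rw [hEq]; exact hhint.indicator hA
  have h1 : μ[h * A.indicator fun _ => (1:ℝ) | m']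
      =ᵐ[μ] h * μ[A.indicator fun _ => (1:ℝ) | m'] :=
    condExp_mul_of_stronglyMeasurable_left hh hmul hind
  calc ∫ x, h x * A.indicator (fun _ => (1:ℝ)) x ∂μ
      = ∫ x, (μ[h * A.indicator fun _ => (1:ℝ) | m']) x ∂μ := by
        rw [integral_condExp hm']; rfl
    _ = ∫ x, (h * μ[A.indicator fun _ => (1:ℝ) | m']) x ∂μ := integral_congr_ae h1
    _ = ∫ x, h x * (μ[A.indicator (fun _ => (1:ℝ)) | m']) x ∂μ := rfl

/-- Base case: equality of set integrals over `A ∩ C` for indicator functions of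
`m₁`-measurable sets, using conditional independence. -/
private lemma base_indicator
    (hm' : m' ≤ mΩ) (hm₁ : m₁ ≤ mΩ) (hmX : mX ≤ mΩ)
    (hprod : ∀ t1 t2, MeasurableSet[m₁] t1 → MeasurableSet[mX] t2 →
      (μ⟦t1 ∩ t2 | m'⟧) =ᵐ[μ] (μ⟦t1 | m'⟧) * (μ⟦t2 | m'⟧))
    {t A C : Set Ω} (ht : MeasurableSet[m₁] t) (hA : MeasurableSet[mX] A)
    (hC : MeasurableSet[m'] C) :
    ∫ x in A ∩ C, t.indicator (fun _ => (1:ℝ)) x ∂μ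
      = ∫ x in A ∩ C, (μ[t.indicator (fun _ => (1:ℝ)) | m']) x ∂μ := by
  have hA0 : MeasurableSet[mΩ] A := hmX _ hA
  have hC0 : MeasurableSet[mΩ] C := hm' _ hC
  have ht0 : MeasurableSet[mΩ] t := hm₁ _ ht
  set g : Ω → ℝ := μ[t.indicator (fun _ => (1:ℝ)) | m'] with hg
  -- LHS = ∫_C E[1_t | m'] * E[1_A | m']
  have lhs1 : ∫ x in A ∩ C, t.indicator (fun _ => (1:ℝ)) x ∂μ
      = ∫ x in C, (t ∩ A).indicator (fun _ => (1:ℝ)) x ∂μ := by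
    rw [Set.inter_comm, ← setIntegral_indicator hA0]
    refine setIntegral_congr_ae hC0 (Filter.Eventually.of_forall fun x _ => ?_)
    by_cases hx : x ∈ A <;> by_cases hx' : x ∈ t <;>
      simp [Set.indicator_apply, hx, hx']
  have hintA : Integrable ((t ∩ A).indicator fun _ => (1:ℝ)) μ :=
    (integrable_const (1:ℝ)).indicator (ht0.inter hA0)
  have lhs2 : ∫ x in C, (t ∩ A).indicator (fun _ => (1:ℝ)) x ∂μ
      = ∫ x in C, (μ⟦t ∩ A | m'⟧) x ∂μ := (setIntegral_condExp hm' hintA hC).symm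
  have lhs3 : ∫ x in C, (μ⟦t ∩ A | m'⟧) x ∂μ
      = ∫ x in C, ((μ⟦t | m'⟧) * (μ⟦A | m'⟧)) x ∂μ :=
    setIntegral_congr_ae hC0 ((hprod t A ht hA).mono fun x hx _ => hx)
  -- RHS = same quantity
  have rhs1 : ∫ x in A ∩ C, g x ∂μ = ∫ x in C, A.indicator g x ∂μ := by
    rw [setIntegral_indicator hA0, Set.inter_comm]
  have e2 : C.indicator (A.indicator g)
      = fun x => (C.indicator g) x * A.indicator (fun _ => (1:ℝ)) x := by
    funext x; by_cases h1 : x ∈ C <;> by_cases h2 : x ∈ A <;>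
      simp [Set.indicator_apply, h1, h2]
  have rhs2 : ∫ x in C, A.indicator g x ∂μ
      = ∫ x, (C.indicator g) x * A.indicator (fun _ => (1:ℝ)) x ∂μ := by
    rw [← integral_indicator hC0, e2]
  have hCg_sm : StronglyMeasurable[m'] (C.indicator g) :=
    stronglyMeasurable_condExp.indicator hC
  have hCg_int : Integrable (C.indicator g) μ := integrable_condExp.indicator hC0
  have rhs3 := pullout_aux hm' hCg_sm hCg_int hA0
  have e3 : (fun x => (C.indicator g) x * (μ⟦A | m'⟧) x)
      = C.indicator (fun x => g x * (μ⟦A | m'⟧) x) := by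
    funext x; by_cases h1 : x ∈ C <;> simp [Set.indicator_apply, h1]
  have rhs4 : ∫ x, (C.indicator g) x * (μ⟦A | m'⟧) x ∂μ
      = ∫ x in C, g x * (μ⟦A | m'⟧) x ∂μ := by
    rw [e3, integral_indicator hC0]
  rw [lhs1, lhs2, lhs3, rhs1, rhs2, rhs3, rhs4]
  exact setIntegral_congr_ae hC0 (Filter.Eventually.of_forall fun x _ => rfl)


private lemma base_const
    (hm' : m' ≤ mΩ) (hm₁ : m₁ ≤ mΩ) (hmX : mX ≤ mΩ)
    (hprod : ∀ t1 t2, MeasurableSet[m₁] t1 → MeasurableSet[mX] t2 →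
      (μ⟦t1 ∩ t2 | m'⟧) =ᵐ[μ] (μ⟦t1 | m'⟧) * (μ⟦t2 | m'⟧))
    {t A C : Set Ω} (ht : MeasurableSet[m₁] t) (hA : MeasurableSet[mX] A)
    (hC : MeasurableSet[m'] C) (c : ℝ) :
    ∫ x in A ∩ C, t.indicator (fun _ => c) x ∂μ
      = ∫ x in A ∩ C, (μ[t.indicator (fun _ => c) | m']) x ∂μ := by
  have hS : MeasurableSet (A ∩ C) := (hmX _ hA).inter (hm' _ hC)
  have e : t.indicator (fun _ => c) = c • t.indicator (fun _ => (1:ℝ)) := by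
    funext x; by_cases hx : x ∈ t <;> simp [Set.indicator_apply, hx]
  rw [e]
  have h1 : μ[c • t.indicator (fun _ => (1:ℝ)) | m']
      =ᵐ[μ] c • μ[t.indicator (fun _ => (1:ℝ)) | m'] := condExp_smul c _ m'
  rw [setIntegral_congr_ae hS (h1.mono fun x hx _ => hx)]
  simp only [Pi.smul_apply, smul_eq_mul]
  rw [integral_const_mul, integral_const_mul, base_indicator hm' hm₁ hmX hprod ht hA hC]

private lemma key_setIntegral
    (hm' : m' ≤ mΩ) (hm₁ : m₁ ≤ mΩ) (hmX : mX ≤ mΩ)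
    (hprod : ∀ t1 t2, MeasurableSet[m₁] t1 → MeasurableSet[mX] t2 →
      (μ⟦t1 ∩ t2 | m'⟧) =ᵐ[μ] (μ⟦t1 | m'⟧) * (μ⟦t2 | m'⟧))
    {f : Ω → ℝ} (hfm : StronglyMeasurable[m₁] f) (hfint : Integrable f μ)
    {A C : Set Ω} (hA : MeasurableSet[mX] A) (hC : MeasurableSet[m'] C) :
    ∫ x in A ∩ C, f x ∂μ = ∫ x in A ∩ C, (μ[f | m']) x ∂μ := by
  have hS : MeasurableSet (A ∩ C) := (hmX _ hA).inter (hm' _ hC)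
  refine MemLp.induction_stronglyMeasurable hm₁ (p := 1) ENNReal.one_ne_top
    (fun f => ∫ x in A ∩ C, f x ∂μ = ∫ x in A ∩ C, (μ[f | m']) x ∂μ)
    ?_ ?_ ?_ ?_ (memLp_one_iff_integrable.mpr hfint) hfm.aestronglyMeasurable
  · intro c s hs _
    exact base_const hm' hm₁ hmX hprod hs hA hC c
  · intro u v _ hu hv _ _ hup hvp
    rw [memLp_one_iff_integrable] at hu hv
    have h1 : μ[u + v | m'] =ᵐ[μ] μ[u | m'] + μ[v | m'] := condExp_add hu hv m'
    rw [setIntegral_congr_ae hS (h1.mono fun x hx _ => hx)]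
    simp only [Pi.add_apply]
    rw [integral_add hu.integrableOn hv.integrableOn,
      integral_add integrable_condExp.integrableOn integrable_condExp.integrableOn,
      hup, hvp]
  · -- closedness in L¹
    have heq₁ : (fun f : lpMeas ℝ ℝ m₁ 1 μ => ∫ x in A ∩ C, (f : Ω → ℝ) x ∂μ) =
        (fun f : Lp ℝ 1 μ => ∫ x in A ∩ C, f x ∂μ) ∘ Submodule.subtypeL _ := by
      refine funext fun f => integral_congr_ae (Filter.EventuallyEq.restrict ?_)
      simp_rw [Submodule.coe_subtypeL', Submodule.coe_subtype]
      exact Filter.Eventually.of_forall fun _ => by trivial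
    have heq₂ : (fun f : lpMeas ℝ ℝ m₁ 1 μ => ∫ x in A ∩ C, (μ[(f : Ω → ℝ) | m']) x ∂μ) =
        (fun f : Lp ℝ 1 μ => ∫ x in A ∩ C, (condExpL1CLM ℝ hm' μ f : Ω → ℝ) x ∂μ)
          ∘ Submodule.subtypeL _ := by
      refine funext fun f => integral_congr_ae (Filter.EventuallyEq.restrict ?_)
      have h1 : μ[((f : Lp ℝ 1 μ) : Ω → ℝ) | m']
          =ᵐ[μ] (condExpL1 hm' μ ((f : Lp ℝ 1 μ) : Ω → ℝ) : Ω → ℝ) :=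
        condExp_ae_eq_condExpL1 hm' _
      have h2 : condExpL1 hm' μ ((f : Lp ℝ 1 μ) : Ω → ℝ)
          = condExpL1CLM ℝ hm' μ ((L1.integrable_coeFn (f : Lp ℝ 1 μ)).toL1 _) :=
        condExpL1_eq _
      rw [Integrable.toL1_coeFn] at h2
      exact h1.trans (h2 ▸ Filter.EventuallyEq.rfl)
    refine isClosed_eq ?_ ?_
    · rw [heq₁]
      exact (continuous_setIntegral _).comp (ContinuousLinearMap.continuous _)
    · rw [heq₂]
      exact (continuous_setIntegral _).comp
        ((condExpL1CLM ℝ hm' μ).continuous.comp (ContinuousLinearMap.continuous _))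
  · intro u v huv hu hP
    calc ∫ x in A ∩ C, v x ∂μ
        = ∫ x in A ∩ C, u x ∂μ :=
          setIntegral_congr_ae hS (huv.symm.mono fun x hx _ => hx)
      _ = ∫ x in A ∩ C, (μ[u | m']) x ∂μ := hP
      _ = ∫ x in A ∩ C, (μ[v | m']) x ∂μ :=
          setIntegral_congr_ae hS ((condExp_congr_ae huv).mono fun x hx _ => hx)


/-- Core result: under the conditional-independence product formula, the conditional
expectation given the sup σ-algebra `mX ⊔ m'` coincides with that given `m'`. -/
private lemma condexp_sup_aux
    (hm' : m' ≤ mΩ) (hm₁ : m₁ ≤ mΩ) (hmX : mX ≤ mΩ)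
    (hprod : ∀ t1 t2, MeasurableSet[m₁] t1 → MeasurableSet[mX] t2 →
      (μ⟦t1 ∩ t2 | m'⟧) =ᵐ[μ] (μ⟦t1 | m'⟧) * (μ⟦t2 | m'⟧))
    {f : Ω → ℝ} (hfm : StronglyMeasurable[m₁] f) (hfint : Integrable f μ) :
    μ[f | mX ⊔ m'] =ᵐ[μ] μ[f | m'] := by
  have hJle : mX ⊔ m' ≤ mΩ := sup_le hmX hm'
  -- π-system generating mX ⊔ m'
  set S : Set (Set Ω) :=
    {s | ∃ A C, MeasurableSet[mX] A ∧ MeasurableSet[m'] C ∧ s = A ∩ C} with hSdef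
  have hSgen : (mX ⊔ m' : MeasurableSpace Ω) = MeasurableSpace.generateFrom S := by
    refine le_antisymm (sup_le ?_ ?_) (MeasurableSpace.generateFrom_le ?_)
    · exact fun s hs => MeasurableSpace.measurableSet_generateFrom
        ⟨s, Set.univ, hs, MeasurableSet.univ, (Set.inter_univ s).symm⟩
    · exact fun s hs => MeasurableSpace.measurableSet_generateFrom
        ⟨Set.univ, s, MeasurableSet.univ, hs, (Set.univ_inter s).symm⟩
    · rintro s ⟨A, C, hA, hC, rfl⟩
      exact ((le_sup_left : mX ≤ mX ⊔ m') _ hA).inter ((le_sup_right : m' ≤ mX ⊔ m') _ hC)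
  have hSpi : IsPiSystem S := by
    rintro s ⟨A1, C1, hA1, hC1, rfl⟩ t ⟨A2, C2, hA2, hC2, rfl⟩ -
    exact ⟨A1 ∩ A2, C1 ∩ C2, hA1.inter hA2, hC1.inter hC2, by
      rw [Set.inter_assoc, ← Set.inter_assoc C1, Set.inter_comm C1 A2, Set.inter_assoc,
        ← Set.inter_assoc]⟩
  -- set integrals agree on the joint σ-algebra
  have key2 : ∀ s, MeasurableSet[mX ⊔ m'] s →
      ∫ x in s, f x ∂μ = ∫ x in s, (μ[f | m']) x ∂μ := by
    refine fun s hs => MeasurableSpace.induction_on_inter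
      (C := fun s _ => ∫ x in s, f x ∂μ = ∫ x in s, (μ[f | m']) x ∂μ)
      hSgen hSpi ?_ ?_ ?_ ?_ s hs
    · simp
    · rintro s ⟨A, C, hA, hC, rfl⟩
      exact key_setIntegral hm' hm₁ hmX hprod hfm hfint hA hC
    · intro t ht h
      have ht0 : MeasurableSet[mΩ] t := hJle _ ht
      have e1 := integral_add_compl ht0 hfint
      have e2 := integral_add_compl ht0 (integrable_condExp (μ := μ) (f := f) (m := m'))
      have e3 : ∫ x, f x ∂μ = ∫ x, (μ[f | m']) x ∂μ := (integral_condExp hm').symm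
      linarith
    · intro g hdisj hmeas hint'
      have hg0 : ∀ n, MeasurableSet[mΩ] (g n) := fun n => hJle _ (hmeas n)
      rw [integral_iUnion hg0 hdisj hfint.integrableOn,
        integral_iUnion hg0 hdisj integrable_condExp.integrableOn]
      exact tsum_congr hint'
  have hgm : AEStronglyMeasurable[mX ⊔ m'] (μ[f | m']) μ :=
    ((stronglyMeasurable_condExp (m := m')).mono
      (le_sup_right : m' ≤ mX ⊔ m')).aestronglyMeasurable
  exact (ae_eq_condExp_of_forall_setIntegral_eq hJle hfint
    (fun s _ _ => integrable_condExp.integrableOn)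
    (fun s hs _ => (key2 s hs).symm) hgm).symm

end Aux

/-- If the integrable random vector `B` and the random vector `X̃` are
conditionally independent given `σ(R)`, then `E[B | σ(X̃, R)] = E[B | σ(R)]` a.s., and by
the tower property `E[B | σ(X̃)] = E[E[B | σ(R)] | σ(X̃)]` a.s. (This is the key step
identifying the 'average effect of treatment on the treated' in the CRC model.) -/
theorem condexp_given_treated_via_rank
    {Ω : Type*} [mΩ : MeasurableSpace Ω] [StandardBorelSpace Ω] [Nonempty Ω]
    (μ : Measure Ω) [IsProbabilityMeasure μ]
    {dw : ℕ} (B : Ω → Fin dw → ℝ)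
    (hBmeas : Measurable B)
    (hBint : ∀ i, Integrable (fun ω => B ω i) μ)
    {𝒳 ℛ : Type*} [MeasurableSpace 𝒳] [MeasurableSpace ℛ]
    (Xt : Ω → 𝒳) (R : Ω → ℛ) (hXt : Measurable Xt) (hR : Measurable R)
    (hci : CondIndepFun (MeasurableSpace.comap R inferInstance) hR.comap_le B Xt μ) :
    (∀ i, μ[fun ω => B ω i | MeasurableSpace.comap (fun ω => (Xt ω, R ω)) inferInstance]
        =ᵐ[μ] μ[fun ω => B ω i | MeasurableSpace.comap R inferInstance])
    ∧ (∀ i, μ[fun ω => B ω i | MeasurableSpace.comap Xt inferInstance]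
        =ᵐ[μ] μ[μ[fun ω => B ω i | MeasurableSpace.comap R inferInstance]
          | MeasurableSpace.comap Xt inferInstance]) := by
  have hjoint : MeasurableSpace.comap (fun ω => (Xt ω, R ω)) inferInstance
      = (MeasurableSpace.comap Xt inferInstance ⊔ MeasurableSpace.comap R inferInstance
          : MeasurableSpace Ω) := by
    rw [show (inferInstance : MeasurableSpace (𝒳 × ℛ))
        = MeasurableSpace.comap Prod.fst inferInstance
          ⊔ MeasurableSpace.comap Prod.snd inferInstance from rfl,
      MeasurableSpace.comap_sup, MeasurableSpace.comap_comp, MeasurableSpace.comap_comp]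
    rfl
  have hprod := (condIndepFun_iff (MeasurableSpace.comap R inferInstance)
    hR.comap_le B Xt hBmeas hXt μ).mp hci
  have hBi : ∀ i, StronglyMeasurable[MeasurableSpace.comap B inferInstance]
      fun ω => B ω i := fun i =>
    ((measurable_pi_apply i).comp
      ((measurable_iff_comap_le (m₁ := MeasurableSpace.comap B inferInstance)).mpr
        le_rfl)).stronglyMeasurable
  have main : ∀ i, μ[fun ω => B ω i |
      (MeasurableSpace.comap Xt inferInstance ⊔ MeasurableSpace.comap R inferInstance
        : MeasurableSpace Ω)]
      =ᵐ[μ] μ[fun ω => B ω i | MeasurableSpace.comap R inferInstance] := fun i =>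
    condexp_sup_aux hR.comap_le hBmeas.comap_le hXt.comap_le hprod (hBi i) (hBint i)
  constructor
  · intro i
    rw [hjoint]
    exact main i
  · intro i
    have h1 : μ[fun ω => B ω i | MeasurableSpace.comap Xt inferInstance]
        =ᵐ[μ] μ[μ[fun ω => B ω i |
          (MeasurableSpace.comap Xt inferInstance ⊔ MeasurableSpace.comap R inferInstance
            : MeasurableSpace Ω)] | MeasurableSpace.comap Xt inferInstance] :=
      (condExp_condExp_of_le le_sup_left (sup_le hXt.comap_le hR.comap_le)).symm
    exact h1.trans (condExp_congr_ae (main i))
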